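/- The relation ∼ on the class of finite connected graphs, defined by G₁ ∼ G₂ if and only if G₁ and G₂ have a common finite covering graph, is an equivalence relation; in particular it is transitive: if G₁ and G₂ have a common finite cover, and G₂ and G₃ have a common finite cover, then G₁ and G₃ have a common finite cover. -/

import Mathlib

open SimpleGraph

/-- `f` is a covering map from `G` to `H`: a homomorphism that is locally bijective, i.e.,
for each vertex `a`, the neighbors of `a` map bijectively onto the neighbors of `f a`. -/
def IsCoveringMap' {V W : Type} (G : SimpleGraph V) (H : SimpleGraph W) (f : V → W) : Prop :=
  (∀ a b, G.Adj a b → H.Adj (f a) (f b)) ∧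
  ∀ a w, H.Adj (f a) w → ∃! b, G.Adj a b ∧ f b = w

/-- `G` and `H` have a common finite (connected) covering graph. -/
def HasCommonCover {V W : Type} (G : SimpleGraph V) (H : SimpleGraph W) : Prop :=
  ∃ (U : Type) (_ : Fintype U) (K : SimpleGraph U), K.Connected ∧
    (∃ f, IsCoveringMap' K G f) ∧ (∃ g, IsCoveringMap' K H g)

/-- Composition of covering maps is a covering map. -/
lemma cov_comp {U V W : Type} {K : SimpleGraph U} {H : SimpleGraph V} {G : SimpleGraph W}
    {f : U → V} {g : V → W} (hf : IsCoveringMap' K H f) (hg : IsCoveringMap' H G g) :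
    IsCoveringMap' K G (g ∘ f) := by
  constructor
  · intro a b hab; exact hg.1 _ _ (hf.1 _ _ hab)
  · intro a w hw
    obtain ⟨b', ⟨hb1, hb2⟩, hbu⟩ := hg.2 (f a) w hw
    obtain ⟨c, ⟨hc1, hc2⟩, hcu⟩ := hf.2 a b' hb1
    refine ⟨c, ⟨hc1, by simp [Function.comp, hc2, hb2]⟩, ?_⟩
    rintro c' ⟨h1, h2⟩
    have : f c' = b' := hbu (f c') ⟨hf.1 _ _ h1, h2⟩
    exact hcu c' ⟨h1, this⟩

/-- Walks in the base graph can be lifted along a covering map (endpoint surjectivity). -/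
lemma cov_lift_walk {U V : Type} {K : SimpleGraph U} {H : SimpleGraph V} {f : U → V}
    (hf : IsCoveringMap' K H f) :
    ∀ {x w : V} (_ : H.Walk x w) (a : U), f a = x → ∃ b, f b = w := by
  intro x w p
  induction p with
  | nil => intro a ha; exact ⟨a, ha⟩
  | cons h p ih =>
    intro a ha
    subst ha
    obtain ⟨b, ⟨_, hb2⟩, _⟩ := hf.2 a _ h
    exact ih b hb2

/-- A covering map onto a connected graph is surjective. -/
lemma cov_surj {U V : Type} {K : SimpleGraph U} {H : SimpleGraph V} {f : U → V}
    (hf : IsCoveringMap' K H f) (hH : H.Connected) (a : U) :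
    ∀ w, ∃ b, f b = w := by
  intro w
  obtain ⟨p⟩ := hH.preconnected (f a) w
  exact cov_lift_walk hf p a rfl

/-- The fiber-product construction: two finite connected covers of a connected graph have a
common finite connected cover (a connected component of the fiber product). -/
lemma fiber_common {U₁ U₂ V : Type} [Fintype U₁] [Fintype U₂]
    {K₁ : SimpleGraph U₁} {K₂ : SimpleGraph U₂} {G : SimpleGraph V}
    (hK₁ : K₁.Connected) (hK₂ : K₂.Connected) (hG : G.Connected)
    {f : U₁ → V} {g : U₂ → V} (hf : IsCoveringMap' K₁ G f) (hg : IsCoveringMap' K₂ G g) :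
    ∃ (T : Type) (_ : Fintype T) (C : SimpleGraph T), C.Connected ∧
      (∃ π₁, IsCoveringMap' C K₁ π₁) ∧ (∃ π₂, IsCoveringMap' C K₂ π₂) := by
  classical
  -- the fiber product
  set P := {p : U₁ × U₂ // f p.1 = g p.2} with hP
  let FP : SimpleGraph P :=
    { Adj := fun p q => K₁.Adj p.1.1 q.1.1 ∧ K₂.Adj p.1.2 q.1.2
      symm := ⟨fun p q h => ⟨h.1.symm, h.2.symm⟩⟩
      loopless := ⟨fun p h => K₁.loopless.irrefl _ h.1⟩ }
  -- projections are covering maps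
  have hπ1 : IsCoveringMap' FP K₁ (fun p => p.1.1) := by
    constructor
    · exact fun a b h => h.1
    · rintro ⟨⟨x, y⟩, hp⟩ w hw
      have hadj : G.Adj (g y) (f w) := hp ▸ (hf.1 x w hw)
      obtain ⟨y', ⟨hy1, hy2⟩, hyu⟩ := hg.2 y (f w) hadj
      refine ⟨⟨(w, y'), hy2.symm⟩, ⟨⟨hw, hy1⟩, rfl⟩, ?_⟩
      rintro ⟨⟨w', z⟩, hz⟩ ⟨⟨ha1, ha2⟩, hfst⟩
      simp only at hfst
      subst hfst
      have : z = y' := hyu z ⟨ha2, hz.symm⟩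
      subst this
      rfl
  have hπ2 : IsCoveringMap' FP K₂ (fun p => p.1.2) := by
    constructor
    · exact fun a b h => h.2
    · rintro ⟨⟨x, y⟩, hp⟩ w hw
      have hadj : G.Adj (f x) (g w) := hp ▸ (hg.1 y w hw)
      obtain ⟨x', ⟨hx1, hx2⟩, hxu⟩ := hf.2 x (g w) hadj
      refine ⟨⟨(x', w), hx2⟩, ⟨⟨hx1, hw⟩, rfl⟩, ?_⟩
      rintro ⟨⟨z, w'⟩, hz⟩ ⟨⟨ha1, ha2⟩, hsnd⟩
      simp only at hsnd
      subst hsnd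
      have : z = x' := hxu z ⟨ha1, hz⟩
      subst this
      rfl
  -- base point
  obtain ⟨x₀⟩ := hK₁.nonempty
  obtain ⟨a₂⟩ := hK₂.nonempty
  obtain ⟨y₀, hy₀⟩ := cov_surj hg hG a₂ (f x₀)
  let p₀ : P := ⟨(x₀, y₀), hy₀.symm⟩
  -- connected component of the base point
  set T := {p : P // FP.Reachable p₀ p} with hT
  let C : SimpleGraph T := FP.comap Subtype.val
  have key : ∀ (x y : P) (w : FP.Walk x y) (hx : FP.Reachable p₀ x),
      C.Reachable ⟨x, hx⟩ ⟨y, hx.trans w.reachable⟩ := by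
    intro x y w
    induction w with
    | nil => intro hx; exact Reachable.refl _
    | @cons x m y h p ih =>
      intro hx
      have hm : FP.Reachable p₀ m := hx.trans h.reachable
      have hadj : C.Adj ⟨x, hx⟩ ⟨m, hm⟩ := h
      exact hadj.reachable.trans (ih hm)
  haveI : Nonempty T := ⟨⟨p₀, Reachable.refl p₀⟩⟩
  have hCconn : C.Connected := by
    refine ⟨?_⟩
    rintro ⟨a, ha⟩ ⟨b, hb⟩
    obtain ⟨wa⟩ := ha
    obtain ⟨wb⟩ := hb
    exact (key p₀ a wa (Reachable.refl p₀)).symm.trans (key p₀ b wb (Reachable.refl p₀))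
  have hι : IsCoveringMap' C FP (Subtype.val) := by
    constructor
    · exact fun a b h => h
    · rintro ⟨a, ha⟩ w hw
      refine ⟨⟨w, ha.trans hw.reachable⟩, ⟨hw, rfl⟩, ?_⟩
      rintro ⟨b, hb⟩ ⟨h1, h2⟩
      exact Subtype.ext h2
  haveI : Finite P := Subtype.finite
  haveI : Finite T := Subtype.finite
  exact ⟨T, Fintype.ofFinite T, C, hCconn,
    ⟨_, cov_comp hι hπ1⟩, ⟨_, cov_comp hι hπ2⟩⟩

/-- On finite connected graphs, "having a common finite cover" is reflexive, symmetric and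
transitive, i.e., an equivalence relation. -/
theorem stmt17 :
    (∀ (V1 : Type) (_ : Fintype V1) (G1 : SimpleGraph V1), G1.Connected →
      HasCommonCover G1 G1) ∧
    (∀ (V1 V2 : Type) (_ : Fintype V1) (_ : Fintype V2)
      (G1 : SimpleGraph V1) (G2 : SimpleGraph V2), G1.Connected → G2.Connected →
      HasCommonCover G1 G2 → HasCommonCover G2 G1) ∧
    (∀ (V1 V2 V3 : Type) (_ : Fintype V1) (_ : Fintype V2) (_ : Fintype V3)
      (G1 : SimpleGraph V1) (G2 : SimpleGraph V2) (G3 : SimpleGraph V3),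
      G1.Connected → G2.Connected → G3.Connected →
      HasCommonCover G1 G2 → HasCommonCover G2 G3 → HasCommonCover G1 G3) := by
  refine ⟨?_, ?_, ?_⟩
  · -- reflexivity: the identity is a covering map
    intro V1 hFin G1 hG1
    have hid : IsCoveringMap' G1 G1 id := by
      constructor
      · exact fun a b h => h
      · intro a w hw
        exact ⟨w, ⟨hw, rfl⟩, fun b hb => hb.2⟩
    exact ⟨V1, hFin, G1, hG1, ⟨id, hid⟩, ⟨id, hid⟩⟩
  · -- symmetry
    rintro V1 V2 _ _ G1 G2 _ _ ⟨U, hU, K, hK, hf, hg⟩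
    exact ⟨U, hU, K, hK, hg, hf⟩
  · -- transitivity via the fiber product
    rintro V1 V2 V3 _ _ _ G1 G2 G3 hG1 hG2 hG3
      ⟨U₁, hU₁, K₁, hK₁, ⟨f₁, hf₁⟩, ⟨f₂, hf₂⟩⟩
      ⟨U₂, hU₂, K₂, hK₂, ⟨g₂, hg₂⟩, ⟨g₃, hg₃⟩⟩
    obtain ⟨T, hTfin, C, hCconn, ⟨π₁, hπ₁⟩, ⟨π₂, hπ₂⟩⟩ :=
      @fiber_common U₁ U₂ V2 hU₁ hU₂ K₁ K₂ G2 hK₁ hK₂ hG2 f₂ g₂ hf₂ hg₂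
    exact ⟨T, hTfin, C, hCconn, ⟨_, cov_comp hπ₁ hf₁⟩, ⟨_, cov_comp hπ₂ hg₃⟩⟩
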